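/- For $d = 2$ and $n \geq 3$: in any labeling of $(\mathbb{Z}/n\mathbb{Z})^2$ with the letters C, A, T, the number of occurrences of CAT (triples $x, x+v, x+2v$ with labels C, A, T in order, where $v \in \{-1,0,1\}^2 \setminus \{0\}$) is at most $(3/2) n^2$. -/

import Mathlib

open Finset

inductive Letter | C | A | T
deriving DecidableEq

namespace CatAux

variable {n : ℕ}

abbrev V (n : ℕ) := Fin 2 → ZMod n

def Dir (v : V n) : Prop := (∀ j, v j = 0 ∨ v j = 1 ∨ v j = -1) ∧ v ≠ 0

def Pos (v : V n) : Prop := v 1 = 1 ∨ (v 1 = 0 ∧ v 0 = 1)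

instance : DecidablePred (Dir (n := n)) := fun _ => by unfold Dir; infer_instance
instance : DecidablePred (Pos (n := n)) := fun _ => by unfold Pos; infer_instance

lemma dir_neg {v : V n} (h : Dir v) : Dir (-v) := by
  obtain ⟨h1, h2⟩ := h
  refine ⟨fun j => ?_, by simpa using h2⟩
  rcases h1 j with h | h | h <;> simp [h]

lemma pos_neg {v : V n} (h : Dir v) (hp : ¬ Pos v) : Pos (-v) := by
  obtain ⟨h1, h2⟩ := h
  rcases h1 1 with hv1 | hv1 | hv1
  · rcases h1 0 with hv0 | hv0 | hv0
    · refine absurd (funext fun j => ?_) h2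
      fin_cases j
      · simpa using hv0
      · simpa using hv1
    · exact absurd (Or.inr ⟨hv1, hv0⟩) hp
    · exact Or.inr ⟨by simp [hv1], by simp [hv0]⟩
  · exact absurd (Or.inl hv1) hp
  · exact Or.inl (by simp [hv1])

lemma dir_pos_cases {v : V n} (h : Dir v) (hp : Pos v) :
    v = ![1, 0] ∨ v = ![0, 1] ∨ v = ![1, 1] ∨ v = ![-1, 1] := by
  obtain ⟨h1, -⟩ := h
  rcases hp with hv1 | ⟨hv1, hv0⟩
  · rcases h1 0 with hv0 | hv0 | hv0
    · exact Or.inr (Or.inl (funext fun j => by fin_cases j <;> simp_all))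
    · exact Or.inr (Or.inr (Or.inl (funext fun j => by fin_cases j <;> simp_all)))
    · exact Or.inr (Or.inr (Or.inr (funext fun j => by fin_cases j <;> simp_all)))
  · exact Or.inl (funext fun j => by fin_cases j <;> simp_all)

lemma bool4 : ∀ a b c d : Bool,
    ((if a ≠ b then 1 else 0) + (if a ≠ c then 1 else 0) +
      (if a ≠ d then 1 else 0) + (if b ≠ c then 1 else 0) : ℕ) ≤ 3 := by decide

variable [NeZero n]

def chi (L : V n → Letter) (x : V n) : Bool := decide (L x = Letter.A)

def ECA (L : V n → Letter) : Finset (V n × V n) :=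
  univ.filter fun p => Dir (p.2 - p.1) ∧ L p.1 = Letter.C ∧ L p.2 = Letter.A

def EAT (L : V n → Letter) : Finset (V n × V n) :=
  univ.filter fun p => Dir (p.2 - p.1) ∧ L p.1 = Letter.A ∧ L p.2 = Letter.T

def Cut (L : V n → Letter) : Finset (V n × V n) :=
  univ.filter fun p => Dir (p.2 - p.1) ∧ Pos (p.2 - p.1) ∧ chi L p.1 ≠ chi L p.2

def Sw (L : V n → Letter) (w : V n) : Finset (V n × V n) :=
  univ.filter fun p => p.2 = p.1 + w ∧ chi L p.1 ≠ chi L p.2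

lemma T_le_ECA (L : V n → Letter) :
    (univ.filter (fun p : V n × V n =>
      (∀ j, p.2 j = 0 ∨ p.2 j = 1 ∨ p.2 j = -1) ∧ p.2 ≠ 0 ∧
      L p.1 = Letter.C ∧ L (p.1 + p.2) = Letter.A ∧
      L (p.1 + 2 • p.2) = Letter.T)).card ≤ (ECA L).card := by
  apply card_le_card_of_injOn (fun p => (p.1, p.1 + p.2))
  · intro p hp
    simp only [mem_coe, mem_filter, mem_univ, true_and] at hp
    obtain ⟨h1, h2, h3, h4, h5⟩ := hp
    simp only [mem_coe, ECA, mem_filter, mem_univ, true_and, add_sub_cancel_left]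
    exact ⟨⟨h1, h2⟩, h3, h4⟩
  · intro p hp q hq h
    have h' : (p.1, p.1 + p.2) = (q.1, q.1 + q.2) := h
    rw [Prod.mk.injEq] at h'
    obtain ⟨h1, h2⟩ := h'
    rw [h1] at h2
    exact Prod.ext_iff.mpr ⟨h1, add_left_cancel h2⟩

lemma T_le_EAT (L : V n → Letter) :
    (univ.filter (fun p : V n × V n =>
      (∀ j, p.2 j = 0 ∨ p.2 j = 1 ∨ p.2 j = -1) ∧ p.2 ≠ 0 ∧
      L p.1 = Letter.C ∧ L (p.1 + p.2) = Letter.A ∧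
      L (p.1 + 2 • p.2) = Letter.T)).card ≤ (EAT L).card := by
  have key : ∀ x v : V n, (x + 2 • v) - (x + v) = v := by
    intro x v; rw [two_nsmul]; abel
  apply card_le_card_of_injOn (fun p => (p.1 + p.2, p.1 + 2 • p.2))
  · intro p hp
    simp only [mem_coe, mem_filter, mem_univ, true_and] at hp
    obtain ⟨h1, h2, h3, h4, h5⟩ := hp
    simp only [mem_coe, EAT, mem_filter, mem_univ, true_and, key]
    exact ⟨⟨h1, h2⟩, h4, h5⟩
  · intro p hp q hq h
    have h' : (p.1 + p.2, p.1 + 2 • p.2) = (q.1 + q.2, q.1 + 2 • q.2) := h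
    rw [Prod.mk.injEq] at h'
    obtain ⟨h1, h2⟩ := h'
    have hv : p.2 = q.2 := by rw [← key p.1 p.2, ← key q.1 q.2, h1, h2]
    rw [hv] at h1
    exact Prod.ext_iff.mpr ⟨add_right_cancel h1, hv⟩

lemma disj (L : V n → Letter) : Disjoint (ECA L) (EAT L) := by
  rw [Finset.disjoint_left]
  intro p hp hq
  simp only [ECA, EAT, mem_filter] at hp hq
  have h1 := hp.2.2.1
  have h2 := hq.2.2.1
  rw [h1] at h2
  exact absurd h2 (by decide)

lemma pat (L : V n → Letter) : ∀ r ∈ ECA L ∪ EAT L,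
    (L r.1 = Letter.C ∧ L r.2 = Letter.A) ∨ (L r.1 = Letter.A ∧ L r.2 = Letter.T) := by
  intro r hr
  rcases mem_union.mp hr with h | h <;> simp only [ECA, EAT, mem_filter] at h <;> tauto

lemma union_le_cut (L : V n → Letter) : (ECA L ∪ EAT L).card ≤ (Cut L).card := by
  apply card_le_card_of_injOn (fun p => if Pos (p.2 - p.1) then p else (p.2, p.1))
  · intro p hp
    have hd : Dir (p.2 - p.1) := by
      rcases mem_union.mp hp with h | h <;>
        · simp only [ECA, EAT, mem_filter] at h
          exact h.2.1
    have hl := pat L p hp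
    have hchi : chi L p.1 ≠ chi L p.2 := by
      rcases hl with ⟨h1, h2⟩ | ⟨h1, h2⟩ <;> simp [chi, h1, h2]
    by_cases hpos : Pos (p.2 - p.1)
    · beta_reduce; rw [if_pos hpos]
      simp only [mem_coe, Cut, mem_filter, mem_univ, true_and]
      exact ⟨hd, hpos, hchi⟩
    · beta_reduce; rw [if_neg hpos]
      simp only [mem_coe, Cut, mem_filter, mem_univ, true_and]
      have hsub : p.1 - p.2 = -(p.2 - p.1) := (neg_sub p.2 p.1).symm
      refine ⟨?_, ?_, hchi.symm⟩
      · show Dir (p.1 - p.2); rw [hsub]; exact dir_neg hd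
      · show Pos (p.1 - p.2); rw [hsub]; exact pos_neg hd hpos
  · intro p hp q hq h0
    have h : (if Pos (p.2 - p.1) then p else (p.2, p.1)) =
        (if Pos (q.2 - q.1) then q else (q.2, q.1)) := h0
    have hp' := pat L p hp
    have hq' := pat L q hq
    by_cases h1 : Pos (p.2 - p.1) <;> by_cases h2 : Pos (q.2 - q.1)
    · rwa [if_pos h1, if_pos h2] at h
    · rw [if_pos h1, if_neg h2] at h
      have e1 : p.1 = q.2 := congrArg Prod.fst h
      have e2 : p.2 = q.1 := congrArg Prod.snd h
      rw [e1, e2] at hp'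
      rcases hp' with ⟨a1, a2⟩ | ⟨a1, a2⟩ <;> rcases hq' with ⟨b1, b2⟩ | ⟨b1, b2⟩ <;>
        simp_all
    · rw [if_neg h1, if_pos h2] at h
      have e1 : p.2 = q.1 := congrArg Prod.fst h
      have e2 : p.1 = q.2 := congrArg Prod.snd h
      rw [← e1, ← e2] at hq'
      rcases hp' with ⟨a1, a2⟩ | ⟨a1, a2⟩ <;> rcases hq' with ⟨b1, b2⟩ | ⟨b1, b2⟩ <;>
        simp_all
    · rw [if_neg h1, if_neg h2] at h
      have e1 : p.2 = q.2 := congrArg Prod.fst h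
      have e2 : p.1 = q.1 := congrArg Prod.snd h
      exact Prod.ext_iff.mpr ⟨e2, e1⟩

lemma cut_le (L : V n → Letter) :
    (Cut L).card ≤ (Sw L ![1,0]).card + (Sw L ![0,1]).card +
      (Sw L ![1,1]).card + (Sw L ![-1,1]).card := by
  have hsub : Cut L ⊆ Sw L ![1,0] ∪ Sw L ![0,1] ∪ Sw L ![1,1] ∪ Sw L ![-1,1] := by
    intro p hp
    simp only [Cut, mem_filter, mem_univ, true_and] at hp
    obtain ⟨hd, hpos, hchi⟩ := hp
    simp only [mem_union, Sw, mem_filter, mem_univ, true_and]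
    rcases dir_pos_cases hd hpos with h | h | h | h
    · exact Or.inl (Or.inl (Or.inl ⟨sub_eq_iff_eq_add'.mp h, hchi⟩))
    · exact Or.inl (Or.inl (Or.inr ⟨sub_eq_iff_eq_add'.mp h, hchi⟩))
    · exact Or.inl (Or.inr ⟨sub_eq_iff_eq_add'.mp h, hchi⟩)
    · exact Or.inr ⟨sub_eq_iff_eq_add'.mp h, hchi⟩
  refine le_trans (card_le_card hsub) ?_
  refine le_trans (card_union_le _ _) (Nat.add_le_add_right ?_ _)
  refine le_trans (card_union_le _ _) (Nat.add_le_add_right ?_ _)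
  exact card_union_le _ _

lemma Sw_card (L : V n → Letter) (w : V n) :
    (Sw L w).card = ∑ x : V n, (if chi L x ≠ chi L (x + w) then (1:ℕ) else 0) := by
  rw [← Finset.card_filter]
  apply card_bij' (fun p _ => p.1) (fun x _ => (x, x + w))
  · intro p hp
    simp only [Sw, mem_filter, mem_univ, true_and] at hp
    simp only [mem_filter, mem_univ, true_and]
    rw [← hp.1]
    exact hp.2
  · intro x hx
    simp only [mem_filter, mem_univ, true_and] at hx
    simp only [Sw, mem_filter, mem_univ, true_and]
    exact hx
  · intro p hp
    simp only [Sw, mem_filter, mem_univ, true_and] at hp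
    exact (Prod.ext_iff.mpr ⟨rfl, hp.1.symm⟩)
  · intro x hx
    rfl

lemma card_V : Fintype.card (V n) = n ^ 2 := by
  simp [ZMod.card]

lemma sum_bound (L : V n → Letter) :
    (Sw L ![1,0]).card + (Sw L ![0,1]).card +
      (Sw L ![1,1]).card + (Sw L ![-1,1]).card ≤ 3 * n ^ 2 := by
  have hw : (![1,0] : V n) + ![-1,1] = ![0,1] := by
    funext j; fin_cases j <;> simp
  have h4 : (Sw L ![-1,1]).card =
      ∑ x : V n, (if chi L (x + ![1,0]) ≠ chi L (x + ![0,1]) then (1:ℕ) else 0) := by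
    rw [Sw_card]
    refine (Fintype.sum_equiv (Equiv.addRight (![1,0] : V n))
      (fun x => if chi L (x + ![1,0]) ≠ chi L (x + ![0,1]) then (1:ℕ) else 0)
      (fun x => if chi L x ≠ chi L (x + ![-1,1]) then (1:ℕ) else 0) ?_).symm
    intro x
    simp only [Equiv.coe_addRight]
    have hx : x + ![1,0] + ![-1,1] = x + ![0,1] := by rw [add_assoc, hw]
    simp only [hx]
  rw [Sw_card, Sw_card, Sw_card, h4, ← Finset.sum_add_distrib, ← Finset.sum_add_distrib,
    ← Finset.sum_add_distrib]
  calc _ ≤ ∑ _x : V n, (3:ℕ) :=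
        Finset.sum_le_sum fun x _ =>
          bool4 (chi L x) (chi L (x + ![1,0])) (chi L (x + ![0,1])) (chi L (x + ![1,1]))
    _ = 3 * n ^ 2 := by
        rw [Finset.sum_const, card_univ, card_V, smul_eq_mul, mul_comm]

lemma main (L : V n → Letter) :
    2 * ((univ.filter (fun p : V n × V n =>
      (∀ j, p.2 j = 0 ∨ p.2 j = 1 ∨ p.2 j = -1) ∧ p.2 ≠ 0 ∧
      L p.1 = Letter.C ∧ L (p.1 + p.2) = Letter.A ∧
      L (p.1 + 2 • p.2) = Letter.T)).card) ≤ 3 * n ^ 2 := by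
  have h1 := T_le_ECA L
  have h2 := T_le_EAT L
  have h3 : (ECA L ∪ EAT L).card = (ECA L).card + (EAT L).card :=
    card_union_of_disjoint (disj L)
  have h4 := union_le_cut L
  have h5 := cut_le L
  have h6 := sum_bound L
  omega

end CatAux

theorem stmt_11 (n : ℕ) [NeZero n] (hn : 3 ≤ n)
    (L : (Fin 2 → ZMod n) → Letter) :
    ((Finset.univ.filter
        (fun p : (Fin 2 → ZMod n) × (Fin 2 → ZMod n) =>
          (∀ j, p.2 j = 0 ∨ p.2 j = 1 ∨ p.2 j = -1) ∧ p.2 ≠ 0 ∧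
          L p.1 = Letter.C ∧ L (p.1 + p.2) = Letter.A ∧
          L (p.1 + 2 • p.2) = Letter.T)).card : ℝ)
      ≤ 3 / 2 * n ^ 2 := by
  have h := CatAux.main (n := n) L
  have hR := (Nat.cast_le (α := ℝ)).mpr h
  push_cast at hR
  linarith
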